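/- Let H=(V,E) be a countable k-uniform hypergraph with k ≥ 2 in which every vertex belongs to only finitely many edges. Then there exists an injection φ: E → ℕ such that H contains no infinite loose path e_1, e_2, ... with φ(e_i) < φ(e_{i+1}) for all i ≥ 1. -/
import Mathlib


/-- Property `C_ℓ` of a `k`-uniform hypergraph with edge set `E`: there is a nonempty set of
vertices `V'` such that every `v ∈ V'` lies in infinitely many edges `e` with `|V' ∩ e| ≥ ℓ`. -/
def PropC {V : Type*} (E : Set (Finset V)) (ℓ : ℕ) : Prop :=
  ∃ V' : Set V, V'.Nonempty ∧
    ∀ v ∈ V', {e | e ∈ E ∧ v ∈ e ∧ ℓ ≤ ((e : Set V) ∩ V').ncard}.Infinite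

/-- The `i`-th edge of the infinite loose path with vertex sequence `w` (0-indexed):
`{w ((k-1)i), w ((k-1)i + 1), …, w ((k-1)i + k - 1)}`. -/
def looseEdge {V : Type*} [DecidableEq V] (k : ℕ) (w : ℕ → V) (i : ℕ) : Finset V :=
  (Finset.range k).image fun j => w ((k - 1) * i + j)

/-- The edge of an infinite `(k-1)`-branching tree `x` at the node indexed by
the finite sequence `s`: `{x s} ∪ {x (a :: s) | a ∈ Fin (k-1)}`. -/
def treeEdge {V : Type*} [DecidableEq V] (k : ℕ) (x : List (Fin (k - 1)) → V)
    (s : List (Fin (k - 1))) : Finset V :=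
  insert (x s) (Finset.univ.image fun a : Fin (k - 1) => x (a :: s))

/-- Given a function `c : α → ℕ` whose fibers on `E` are finite, there is an injection
`φ` on `E` which is strictly monotone with respect to `c`. -/
lemma auxOrderEmbed {α : Type*} [Countable α] (E : Set α) (c : α → ℕ)
    (hfib : ∀ m, {e | e ∈ E ∧ c e = m}.Finite) :
    ∃ φ : α → ℕ, Set.InjOn φ E ∧ ∀ e ∈ E, ∀ e' ∈ E, c e < c e' → φ e < φ e' := by
  classical
  obtain ⟨enc, henc⟩ := exists_injective_nat α
  set fib : ℕ → Finset α := fun m => (hfib m).toFinset with hfibdef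
  set S : ℕ → ℕ := fun m => ∑ j ∈ Finset.range m, (fib j).card with hSdef
  set idx : α → ℕ := fun e => ((fib (c e)).filter (fun x => enc x < enc e)).card with hidxdef
  have hmemfib : ∀ e ∈ E, e ∈ fib (c e) := fun e he => (hfib (c e)).mem_toFinset.mpr ⟨he, rfl⟩
  have hidxlt : ∀ e ∈ E, idx e < (fib (c e)).card := by
    intro e he
    have hsub : (fib (c e)).filter (fun x => enc x < enc e) ⊆ (fib (c e)).erase e := by
      rw [Finset.subset_erase]
      exact ⟨Finset.filter_subset _ _, by simp⟩
    calc idx e ≤ ((fib (c e)).erase e).card := Finset.card_le_card hsub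
      _ < (fib (c e)).card := Finset.card_erase_lt_of_mem (hmemfib e he)
  have hSmono : ∀ m m', m ≤ m' → S m ≤ S m' := by
    intro m m' h
    exact Finset.sum_le_sum_of_subset (Finset.range_subset_range.mpr h)
  have key : ∀ e ∈ E, ∀ e' ∈ E, c e < c e' → S (c e) + idx e < S (c e') + idx e' := by
    intro e he e' he' hlt
    have h1 : S (c e) + idx e < S (c e + 1) := by
      rw [hSdef]
      simp only [Finset.sum_range_succ]
      exact Nat.add_lt_add_left (hidxlt e he) _
    have h2 : S (c e + 1) ≤ S (c e') := hSmono _ _ hlt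
    have h3 : S (c e') ≤ S (c e') + idx e' := Nat.le_add_right _ _
    omega
  refine ⟨fun e => S (c e) + idx e, ?_, key⟩
  intro e he e' he' heq
  simp only at heq
  rcases lt_trichotomy (c e) (c e') with h | h | h
  · exact absurd heq (Nat.ne_of_lt (key e he e' he' h))
  · -- same fiber; compare idx
    rw [h] at heq
    have hidx : idx e = idx e' := by omega
    by_contra hne
    have hencne : enc e ≠ enc e' := fun hh => hne (henc hh)
    have main : ∀ a ∈ E, ∀ b ∈ E, c a = c b → enc a < enc b → idx a < idx b := by
      intro a ha b hb hcab hab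
      have hsub : (fib (c a)).filter (fun x => enc x < enc a) ⊆
          (fib (c b)).filter (fun x => enc x < enc b) := by
        intro x hx
        rw [Finset.mem_filter] at hx ⊢
        rw [← hcab]
        exact ⟨hx.1, lt_trans hx.2 hab⟩
      have hmem : a ∈ (fib (c b)).filter (fun x => enc x < enc b) := by
        rw [Finset.mem_filter, ← hcab]
        exact ⟨hmemfib a ha, hab⟩
      have hnot : a ∉ (fib (c a)).filter (fun x => enc x < enc a) := by simp
      exact Finset.card_lt_card ((Finset.ssubset_iff_of_subset hsub).mpr ⟨a, hmem, hnot⟩)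
    rcases lt_or_gt_of_ne hencne with hh | hh
    · exact absurd hidx (Nat.ne_of_lt (main e he e' he' h hh))
    · exact absurd hidx.symm (Nat.ne_of_lt (main e' he' e he h.symm hh))
  · exact absurd heq.symm (Nat.ne_of_lt (key e' he' e he h))

/-- A locally finite countable hypergraph has an exhaustion by finite edge sets closed
under taking neighbours. -/
lemma auxExhaust {V : Type*} [Countable V] [DecidableEq V]
    (E : Set (Finset V)) (hfin : ∀ v : V, {e | e ∈ E ∧ v ∈ e}.Finite) :
    ∃ F : ℕ → Finset (Finset V), F 0 = ∅ ∧ Monotone F ∧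
      (∀ n, ∀ e ∈ F n, e ∈ E) ∧ (∀ e ∈ E, ∃ n, e ∈ F n) ∧
      (∀ n, ∀ e' ∈ F n, ∀ e ∈ E, (∃ v ∈ e', v ∈ e) → e ∈ F (n + 1)) := by
  classical
  obtain ⟨enc, henc⟩ := exists_injective_nat (Finset V)
  have hA : ∀ n : ℕ, {e | e ∈ E ∧ enc e ≤ n}.Finite := by
    intro n
    refine ((Set.finite_Iic n).preimage henc.injOn).subset ?_
    intro e he
    exact he.2
  have hB : ∀ s : Finset (Finset V), {e | e ∈ E ∧ ∃ e' ∈ s, ∃ v ∈ e', v ∈ e}.Finite := by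
    intro s
    refine Set.Finite.subset (Set.Finite.biUnion s.finite_toSet (fun e' _ =>
      Set.Finite.biUnion e'.finite_toSet (fun v _ => hfin v))) ?_
    rintro e ⟨he, e', he', v, hv, hv2⟩
    simp only [Set.mem_iUnion]
    exact ⟨e', he', v, hv, he, hv2⟩
  set F : ℕ → Finset (Finset V) := fun n =>
    Nat.rec ∅ (fun n Fn => (Fn ∪ (hA n).toFinset) ∪ (hB Fn).toFinset) n with hFdef
  have hFs : ∀ n, F (n + 1) = (F n ∪ (hA n).toFinset) ∪ (hB (F n)).toFinset := fun n => rfl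
  have hstep : ∀ n, F n ⊆ F (n + 1) := by
    intro n
    rw [hFs]
    exact Finset.subset_union_left.trans Finset.subset_union_left
  refine ⟨F, rfl, monotone_nat_of_le_succ hstep, ?_, ?_, ?_⟩
  · intro n
    induction n with
    | zero => intro e he; exact absurd he (by simp [hFdef])
    | succ n ih =>
      intro e he
      rw [hFs] at he
      rcases Finset.mem_union.mp he with h | h
      · rcases Finset.mem_union.mp h with h | h
        · exact ih e h
        · exact ((hA n).mem_toFinset.mp h).1
      · exact ((hB (F n)).mem_toFinset.mp h).1
  · intro e he
    refine ⟨enc e + 1, ?_⟩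
    rw [hFs]
    exact Finset.mem_union_left _ (Finset.mem_union_right _
      ((hA (enc e)).mem_toFinset.mpr ⟨he, le_refl _⟩))
  · intro n e' he' e he hv
    rw [hFs]
    exact Finset.mem_union_right _ ((hB (F n)).mem_toFinset.mpr ⟨he, e', he', hv⟩)

theorem stmt4 {V : Type*} [Countable V] [Infinite V] [DecidableEq V]
    (k : ℕ) (hk : 2 ≤ k) (E : Set (Finset V)) (hunif : ∀ e ∈ E, e.card = k)
    (hfin : ∀ v : V, {e | e ∈ E ∧ v ∈ e}.Finite) :
    ∃ φ : Finset V → ℕ, Set.InjOn φ E ∧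
      ¬ ∃ w : ℕ → V, Function.Injective w ∧ (∀ i, looseEdge k w i ∈ E) ∧
        ∀ i, φ (looseEdge k w i) < φ (looseEdge k w (i + 1)) := by
  classical
  obtain ⟨F, hF0, hFmono, hFE, hFcov, hFcl⟩ := auxExhaust E hfin
  set τ : ℕ → ℕ := fun n => if n % 2 = 1 then n + 1 else n - 1 with hτdef
  have hτinv : ∀ n, τ (τ n) = n := by
    intro n
    simp only [hτdef]
    split_ifs <;> omega
  set b : Finset V → ℕ := fun e => sInf {n | e ∈ F n} with hbdef
  have hbmem : ∀ e ∈ E, e ∈ F (b e) := fun e he => Nat.sInf_mem (hFcov e he)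
  have hble : ∀ (e : Finset V) (n : ℕ), e ∈ F n → b e ≤ n := fun e n h => Nat.sInf_le h
  set c : Finset V → ℕ := fun e => τ (b e) with hcdef
  have hfib : ∀ m, {e | e ∈ E ∧ c e = m}.Finite := by
    intro m
    refine (F (τ m)).finite_toSet.subset ?_
    rintro e ⟨he, hce⟩
    simp only [hcdef] at hce
    have hbe : b e = τ m := by rw [← hce, hτinv]
    exact Finset.mem_coe.mpr (hbe ▸ hbmem e he)
  obtain ⟨φ, hφinj, hφlt⟩ := auxOrderEmbed E c hfib
  refine ⟨φ, hφinj, ?_⟩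
  rintro ⟨w, hw, hE, hinc⟩
  -- basic facts about loose edges
  have hmem_loose : ∀ i j, j < k → w ((k - 1) * i + j) ∈ looseEdge k w i := by
    intro i j hj
    exact Finset.mem_image.mpr ⟨j, Finset.mem_range.mpr hj, rfl⟩
  have hshare : ∀ i, w ((k - 1) * (i + 1)) ∈ looseEdge k w i ∧
      w ((k - 1) * (i + 1)) ∈ looseEdge k w (i + 1) := by
    intro i
    constructor
    · have := hmem_loose i (k - 1) (by omega)
      rwa [← Nat.mul_succ] at this
    · have := hmem_loose (i + 1) 0 (by omega)
      rwa [Nat.add_zero] at this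
  have hinj_lt : ∀ i j, i < j → looseEdge k w i ≠ looseEdge k w j := by
    intro i j hij heq
    have hvj : w ((k - 1) * j + (k - 1)) ∈ looseEdge k w j :=
      hmem_loose j (k - 1) (by omega)
    rw [← heq] at hvj
    obtain ⟨t, ht, hte⟩ := Finset.mem_image.mp hvj
    have htk : t < k := Finset.mem_range.mp ht
    have heqn : (k - 1) * i + t = (k - 1) * j + (k - 1) := hw hte
    have hlt : (k - 1) * i + t < (k - 1) * j + (k - 1) := by
      calc (k - 1) * i + t ≤ (k - 1) * i + (k - 1) := Nat.add_le_add_left (by omega) _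
        _ = (k - 1) * (i + 1) := (Nat.mul_succ _ _).symm
        _ ≤ (k - 1) * j := Nat.mul_le_mul_left _ (by omega)
        _ < (k - 1) * j + (k - 1) := Nat.lt_add_of_pos_right (by omega)
    exact absurd heqn (Nat.ne_of_lt hlt)
  have hinj_e : Function.Injective (fun i => looseEdge k w i) := by
    intro i j hij
    by_contra hne
    rcases lt_or_gt_of_ne hne with h | h
    · exact hinj_lt i j h hij
    · exact hinj_lt j i h hij.symm
  -- step inequality
  have hstep : ∀ i, b (looseEdge k w (i + 1)) ≤ b (looseEdge k w i) + 1 ∧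
      b (looseEdge k w i) ≤ b (looseEdge k w (i + 1)) + 1 := by
    intro i
    obtain ⟨hv1, hv2⟩ := hshare i
    constructor
    · exact hble _ _ (hFcl (b (looseEdge k w i)) _ (hbmem _ (hE i)) _ (hE (i + 1))
        ⟨_, hv1, hv2⟩)
    · exact hble _ _ (hFcl (b (looseEdge k w (i + 1))) _ (hbmem _ (hE (i + 1))) _ (hE i)
        ⟨_, hv2, hv1⟩)
  -- unboundedness
  have hub : ∀ N, ∃ i, N < b (looseEdge k w i) := by
    intro N
    have hfinpre : ((fun i => looseEdge k w i) ⁻¹' ↑(F N)).Finite :=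
      Set.Finite.preimage hinj_e.injOn (F N).finite_toSet
    obtain ⟨i, hi⟩ := hfinpre.infinite_compl.nonempty
    refine ⟨i, ?_⟩
    by_contra hle
    exact hi (hFmono (by omega : b (looseEdge k w i) ≤ N) (hbmem _ (hE i)))
  -- monotonicity of c along the path
  have hmono : ∀ i, c (looseEdge k w i) ≤ c (looseEdge k w (i + 1)) := by
    intro i
    by_contra hlt
    push_neg at hlt
    exact absurd (hinc i) (Nat.not_lt_of_gt (hφlt _ (hE (i + 1)) _ (hE i) hlt))
  -- final contradiction
  set M : ℕ := 2 * b (looseEdge k w 0) + 1 with hMdef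
  have hex : ∃ j, M + 1 ≤ b (looseEdge k w j) := by
    obtain ⟨i, hi⟩ := hub M
    exact ⟨i, hi⟩
  have hj := Nat.find_spec hex
  have hj0 : Nat.find hex ≠ 0 := by
    intro h
    rw [h] at hj
    omega
  obtain ⟨j', hjj⟩ := Nat.exists_eq_succ_of_ne_zero hj0
  have hj'lt : j' < Nat.find hex := by omega
  have hj' : ¬ (M + 1 ≤ b (looseEdge k w j')) := Nat.find_min hex hj'lt
  rw [hjj] at hj
  have hj2 : M + 1 ≤ b (looseEdge k w (j' + 1)) := hj
  have h1 := (hstep j').1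
  have hbj : b (looseEdge k w (j' + 1)) = M + 1 := by omega
  have hbj' : b (looseEdge k w j') = M := by omega
  have hmj := hmono j'
  have hcj' : c (looseEdge k w j') = M + 1 := by
    simp only [hcdef, hbj', hτdef]
    rw [if_pos (by omega : M % 2 = 1)]
  have hcj : c (looseEdge k w (j' + 1)) = M := by
    simp only [hcdef, hbj, hτdef]
    rw [if_neg (by omega : ¬ (M + 1) % 2 = 1)]
    omega
  omega
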